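/- (Criterion for absolute continuity.) Let μ be a finite Borel measure on ℝ with Stieltjes transform F(z) = ∫ dμ(t)/(t − z) for Im z > 0. Let (a,b) be a finite interval and p > 0. If liminf_{y → 0⁺} ∫_a^b |F(x + iy)|^{1+p} dx < ∞, then the restriction of μ to (a,b) is absolutely continuous with respect to Lebesgue measure (indeed dμ = g(x)dx on (a,b) with g ∈ L^{1+p}). -/

import Mathlib

open MeasureTheory Filter Topology
open scoped ENNReal
open Metric Complex

noncomputable section

section AuxLemmas

variable (μ : Measure ℝ) [IsFiniteMeasure μ]

variable (μ : Measure ℝ) [IsFiniteMeasure μ]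

lemma aux_ne (z : ℂ) (hz : 0 < z.im) (t : ℝ) : (t:ℂ) - z ≠ 0 := by
  intro h
  have : ((t:ℂ) - z).im = 0 := by rw [h]; simp
  simp [Complex.sub_im] at this
  linarith

lemma aux_cont (z : ℂ) (hz : 0 < z.im) : Continuous (fun t : ℝ => ((t:ℂ) - z)⁻¹) :=
  ((Complex.continuous_ofReal.sub continuous_const).inv₀ (fun t => aux_ne z hz t))

lemma aux_norm (z : ℂ) (hz : 0 < z.im) (t : ℝ) : ‖((t:ℂ) - z)⁻¹‖ ≤ (z.im)⁻¹ := by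
  rw [norm_inv]
  have h1 : z.im ≤ ‖(t:ℂ) - z‖ := by
    calc z.im = |((t:ℂ) - z).im| := by
          rw [Complex.sub_im, Complex.ofReal_im, zero_sub, abs_neg, _root_.abs_of_nonneg hz.le]
    _ ≤ ‖(t:ℂ) - z‖ := Complex.abs_im_le_norm _
  exact inv_anti₀ hz h1

lemma aux_integrable (z : ℂ) (hz : 0 < z.im) :
    Integrable (fun t : ℝ => ((t:ℂ) - z)⁻¹) μ := by
  refine Integrable.mono' (integrable_const ((z.im)⁻¹)) ((aux_cont z hz).aestronglyMeasurable) ?_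
  exact Eventually.of_forall (aux_norm z hz)

lemma aux_im (z : ℂ) (hz : 0 < z.im) (t : ℝ) :
    (((t:ℂ) - z)⁻¹).im = z.im / ((t - z.re)^2 + z.im^2) := by
  rw [Complex.inv_im]
  have : Complex.normSq ((t:ℂ) - z) = (t - z.re)^2 + z.im^2 := by
    rw [Complex.normSq_apply]; simp [Complex.sub_re, Complex.sub_im]; ring
  rw [this, Complex.sub_im]
  simp

-- the imaginary part identity
lemma aux_imF {F : ℂ → ℂ} (hF : ∀ z : ℂ, 0 < z.im → F z = ∫ t : ℝ, ((t : ℂ) - z)⁻¹ ∂μ)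
    (x y : ℝ) (hy : 0 < y) :
    (F ((x:ℂ) + (y:ℂ) * Complex.I)).im = ∫ t : ℝ, y / ((t - x)^2 + y^2) ∂μ := by
  set z : ℂ := (x:ℂ) + (y:ℂ) * Complex.I with hzdef
  have hz : z.im = y := by simp [hzdef]
  have hzre : z.re = x := by simp [hzdef]
  have hz0 : 0 < z.im := by rw [hz]; exact hy
  have h := integral_im (𝕜 := ℂ) (aux_integrable μ z hz0)
  simp only [RCLike.im_to_complex] at h
  rw [hF z hz0, ← h]
  refine integral_congr_ae (Eventually.of_forall fun t => ?_)
  simp only [aux_im z hz0 t, hz, hzre]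

-- lintegral version
lemma aux_imF_lintegral {F : ℂ → ℂ}
    (hF : ∀ z : ℂ, 0 < z.im → F z = ∫ t : ℝ, ((t : ℂ) - z)⁻¹ ∂μ)
    (x y : ℝ) (hy : 0 < y) :
    ENNReal.ofReal ((F ((x:ℂ) + (y:ℂ) * Complex.I)).im)
      = ∫⁻ t : ℝ, ENNReal.ofReal (y / ((t - x)^2 + y^2)) ∂μ := by
  rw [aux_imF μ hF x y hy]
  refine ofReal_integral_eq_lintegral_ofReal ?_ ?_
  · set z : ℂ := (x:ℂ) + (y:ℂ) * Complex.I with hzdef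
    have hz0 : 0 < z.im := by simp [hzdef, hy]
    have h2 := (aux_integrable μ z hz0).im
    simp only [RCLike.im_to_complex] at h2
    refine h2.congr (Eventually.of_forall fun t => ?_)
    simp only [aux_im z hz0 t, hzdef]
    simp [Complex.normSq_apply]
    ring
  · refine Eventually.of_forall fun t => ?_
    positivity

-- pointwise kernel lower bound on closed ball + maximal estimate
lemma aux_ball_bound {F : ℂ → ℂ}
    (hF : ∀ z : ℂ, 0 < z.im → F z = ∫ t : ℝ, ((t : ℂ) - z)⁻¹ ∂μ)
    (x y : ℝ) (hy : 0 < y) :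
    μ (Metric.closedBall x y) ≤
      ENNReal.ofReal (2*y) * ENNReal.ofReal (‖F ((x:ℂ) + (y:ℂ) * Complex.I)‖) := by
  have key : ENNReal.ofReal ((2*y)⁻¹) * μ (Metric.closedBall x y)
      ≤ ENNReal.ofReal ((F ((x:ℂ) + (y:ℂ) * Complex.I)).im) := by
    rw [aux_imF_lintegral μ hF x y hy, ← setLIntegral_const (Metric.closedBall x y) _]
    refine le_trans (setLIntegral_mono' measurableSet_closedBall fun t ht => ?_)
      (setLIntegral_le_lintegral _ _)
    refine ENNReal.ofReal_le_ofReal ?_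
    rw [Metric.mem_closedBall, Real.dist_eq] at ht
    have h1 : (t-x)^2 + y^2 ≤ 2*y^2 := by
      have := _root_.sq_abs (t-x) ▸ (pow_le_pow_left₀ (abs_nonneg _) ht 2)
      nlinarith [this]
    rw [inv_eq_one_div]
    rw [div_le_div_iff₀ (by positivity) (by positivity)]
    nlinarith
  have him : ENNReal.ofReal ((F ((x:ℂ) + (y:ℂ) * Complex.I)).im)
      ≤ ENNReal.ofReal (‖F ((x:ℂ) + (y:ℂ) * Complex.I)‖) := by
    refine ENNReal.ofReal_le_ofReal ?_
    exact le_trans (le_abs_self _) (Complex.abs_im_le_norm _)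
  calc μ (Metric.closedBall x y)
      = ENNReal.ofReal (2*y) * (ENNReal.ofReal ((2*y)⁻¹) * μ (Metric.closedBall x y)) := by
        rw [← mul_assoc, ← ENNReal.ofReal_mul (by positivity)]
        rw [mul_inv_cancel₀ (by positivity), ENNReal.ofReal_one, one_mul]
    _ ≤ _ := mul_le_mul_right (key.trans him) _




lemma aux_contF {F : ℂ → ℂ} (hF : ∀ z : ℂ, 0 < z.im → F z = ∫ t : ℝ, ((t : ℂ) - z)⁻¹ ∂μ)
    (y : ℝ) (hy : 0 < y) :
    Continuous (fun x : ℝ => F ((x:ℂ) + (y:ℂ) * Complex.I)) := by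
  have him : ∀ x : ℝ, 0 < ((x:ℂ) + (y:ℂ) * Complex.I).im := fun x => by simp [hy]
  have heq : (fun x : ℝ => F ((x:ℂ) + (y:ℂ) * Complex.I))
      = fun x : ℝ => ∫ t : ℝ, ((t:ℂ) - ((x:ℂ) + (y:ℂ) * Complex.I))⁻¹ ∂μ :=
    funext fun x => hF _ (him x)
  rw [heq]
  refine continuous_of_dominated (bound := fun _ => y⁻¹) ?_ ?_ (integrable_const _) ?_
  · intro x; exact (aux_cont _ (him x)).aestronglyMeasurable
  · intro x
    refine Eventually.of_forall fun t => ?_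
    have := aux_norm ((x:ℂ) + (y:ℂ) * Complex.I) (him x) t
    simpa using this
  · refine Eventually.of_forall fun t => ?_
    refine Continuous.inv₀ ?_ fun x => aux_ne _ (him x) t
    continuity

lemma aux_holder (ν : Measure ℝ) {f : ℝ → ℝ≥0∞} (hf : AEMeasurable f ν) {p : ℝ} (hp : 0 < p) :
    ∫⁻ x, f x ∂ν ≤ (∫⁻ x, f x ^ (1+p) ∂ν) ^ (1/(1+p)) * (ν Set.univ) ^ (p/(1+p)) := by
  have hpq : Real.HolderConjugate (1+p) ((1+p)/p) := by
    rw [Real.holderConjugate_iff]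
    constructor
    · linarith
    · field_simp
  have H := ENNReal.lintegral_mul_le_Lp_mul_Lq ν hpq hf aemeasurable_const (g := fun _ => 1)
  have h1 : (1:ℝ)/((1+p)/p) = p/(1+p) := by field_simp
  simpa [h1, lintegral_const] using H

lemma aux_kernel_integral (t δ y : ℝ) (hδ : 0 < δ) (hy : 0 < y) :
    ENNReal.ofReal (2 * Real.arctan (δ/y))
      ≤ ∫⁻ x in Set.Ioo (t-δ) (t+δ), ENNReal.ofReal (y / ((t-x)^2 + y^2)) := by
  have hderiv : ∀ x : ℝ, HasDerivAt (fun x => Real.arctan ((x - t)/y))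
      (y / ((t-x)^2 + y^2)) x := by
    intro x
    have h1 : HasDerivAt (fun x : ℝ => (x - t)/y) (1/y) x := by
      simpa using ((hasDerivAt_id x).sub_const t).div_const y
    have h2 := (Real.hasDerivAt_arctan ((x - t)/y)).comp x h1
    refine h2.congr_deriv ?_
    rw [div_pow]
    field_simp
    ring
  have hcont : Continuous (fun x : ℝ => y / ((t-x)^2 + y^2)) := by
    refine continuous_const.div ?_ fun x => by positivity
    continuity
  have hii : IntervalIntegrable (fun x : ℝ => y / ((t-x)^2 + y^2)) volume (t-δ) (t+δ) :=
    hcont.intervalIntegrable _ _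
  have hint : ∫ x in (t-δ)..(t+δ), y / ((t-x)^2 + y^2) = 2 * Real.arctan (δ/y) := by
    rw [intervalIntegral.integral_eq_sub_of_hasDerivAt (fun x _ => hderiv x) hii]
    have e1 : (t + δ - t)/y = δ/y := by ring_nf
    have e2 : (t - δ - t)/y = -(δ/y) := by ring_nf
    rw [e1, e2, Real.arctan_neg]
    ring
  have hle : t - δ ≤ t + δ := by linarith
  have hEq : ENNReal.ofReal (2 * Real.arctan (δ/y))
      = ∫⁻ x in Set.Ioo (t-δ) (t+δ), ENNReal.ofReal (y / ((t-x)^2 + y^2)) := by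
    rw [← hint, intervalIntegral.integral_of_le hle, integral_Ioc_eq_integral_Ioo]
    refine ofReal_integral_eq_lintegral_ofReal ?_ ?_
    · exact (hii.1.mono_set Set.Ioo_subset_Ioc_self)
    · exact Eventually.of_forall fun x => by positivity
  exact hEq.le




lemma aux_liminf_kernel (V : Set ℝ) (hV : IsOpen V) {t : ℝ} (ht : t ∈ V)
    (yseq : ℕ → ℝ) (hpos : ∀ n, 0 < yseq n) (hlim : Tendsto yseq atTop (𝓝[>] 0)) :
    ENNReal.ofReal Real.pi
      ≤ liminf (fun n => ∫⁻ x in V,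
          ENNReal.ofReal (yseq n / ((t-x)^2 + (yseq n)^2))) atTop := by
  obtain ⟨δ, hδ, hsub⟩ := Metric.isOpen_iff.1 hV t ht
  rw [Real.ball_eq_Ioo] at hsub
  have hmono : ∀ n, ENNReal.ofReal (2 * Real.arctan (δ / yseq n))
      ≤ ∫⁻ x in V, ENNReal.ofReal (yseq n / ((t-x)^2 + (yseq n)^2)) :=
    fun n => (aux_kernel_integral t δ (yseq n) hδ (hpos n)).trans (lintegral_mono_set hsub)
  have htend : Tendsto (fun n => ENNReal.ofReal (2 * Real.arctan (δ / yseq n))) atTop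
      (𝓝 (ENNReal.ofReal Real.pi)) := by
    have h1 : Tendsto (fun n => δ / yseq n) atTop atTop := by
      have h0 : Tendsto (fun n => (yseq n)⁻¹) atTop atTop :=
        tendsto_inv_nhdsGT_zero.comp hlim
      simpa [div_eq_mul_inv] using h0.const_mul_atTop hδ
    have h2 : Tendsto (fun n => Real.arctan (δ / yseq n)) atTop (𝓝 (Real.pi/2)) :=
      (Real.tendsto_arctan_atTop.mono_right nhdsWithin_le_nhds).comp h1
    have h3 : Tendsto (fun n => 2 * Real.arctan (δ / yseq n)) atTop (𝓝 Real.pi) := by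
      have h4 := h2.const_mul 2
      have h5 : (2:ℝ) * (Real.pi/2) = Real.pi := by ring
      rwa [h5] at h4
    exact (ENNReal.continuous_ofReal.tendsto _).comp h3
  calc ENNReal.ofReal Real.pi
      = liminf (fun n => ENNReal.ofReal (2 * Real.arctan (δ / yseq n))) atTop :=
        htend.liminf_eq.symm
    _ ≤ _ := liminf_le_liminf (Eventually.of_forall hmono)

lemma aux_open_bound {F : ℂ → ℂ}
    (hF : ∀ z : ℂ, 0 < z.im → F z = ∫ t : ℝ, ((t : ℂ) - z)⁻¹ ∂μ)
    (V : Set ℝ) (hV : IsOpen V)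
    (yseq : ℕ → ℝ) (hpos : ∀ n, 0 < yseq n) (hlim : Tendsto yseq atTop (𝓝[>] 0)) :
    ENNReal.ofReal Real.pi * μ V
      ≤ liminf (fun n => ∫⁻ x in V,
          ENNReal.ofReal ((F ((x:ℂ) + (yseq n : ℂ) * Complex.I)).im)) atTop := by
  set K : ℕ → ℝ → ℝ≥0∞ := fun n t => ∫⁻ x in V,
      ENNReal.ofReal (yseq n / ((t-x)^2 + (yseq n)^2)) with hK
  have hkcont : ∀ n, Continuous (fun q : ℝ × ℝ =>
      ENNReal.ofReal (yseq n / ((q.1 - q.2)^2 + (yseq n)^2))) := by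
    intro n
    refine ENNReal.continuous_ofReal.comp ?_
    refine continuous_const.div ?_ fun q => by have := hpos n; positivity
    continuity
  have hKmeas : ∀ n, Measurable (K n) := by
    intro n
    exact Measurable.lintegral_prod_right ((hkcont n).measurable)
  have hswap : ∀ n, (∫⁻ x in V,
      ENNReal.ofReal ((F ((x:ℂ) + (yseq n : ℂ) * Complex.I)).im)) = ∫⁻ t, K n t ∂μ := by
    intro n
    have h1 : (fun x : ℝ => ENNReal.ofReal ((F ((x:ℂ) + (yseq n : ℂ) * Complex.I)).im))
        = fun x : ℝ => ∫⁻ t, ENNReal.ofReal (yseq n / ((t-x)^2 + (yseq n)^2)) ∂μ :=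
      funext fun x => aux_imF_lintegral μ hF x (yseq n) (hpos n)
    rw [h1]
    exact lintegral_lintegral_swap ((hkcont n).comp continuous_swap).aemeasurable
  calc ENNReal.ofReal Real.pi * μ V = ∫⁻ t in V, ENNReal.ofReal Real.pi ∂μ :=
        (setLIntegral_const _ _).symm
    _ ≤ ∫⁻ t in V, liminf (fun n => K n t) atTop ∂μ := by
        refine setLIntegral_mono' hV.measurableSet fun t ht => ?_
        exact aux_liminf_kernel V hV ht yseq hpos hlim
    _ ≤ ∫⁻ t, liminf (fun n => K n t) atTop ∂μ := setLIntegral_le_lintegral _ _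
    _ ≤ liminf (fun n => ∫⁻ t, K n t ∂μ) atTop := lintegral_liminf_le hKmeas
    _ = _ := by simp_rw [hswap]


end AuxLemmas



/-- **criterion for absolute continuity.** Let `μ` be a finite Borel
measure on `ℝ` with Stieltjes transform `F(z) = ∫ dμ(t)/(t−z)` (`Im z > 0`).  Let
`(a,b)` be a finite interval and `p > 0`.  If
`liminf_{y→0⁺} ∫_a^b |F(x+iy)|^{1+p} dx < ∞`, then the restriction of `μ` to `(a,b)`
is absolutely continuous with respect to Lebesgue measure; indeed `dμ = g dx` on
`(a,b)` with `g ∈ L^{1+p}`. -/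
theorem statement7 (μ : Measure ℝ) [IsFiniteMeasure μ] (a b : ℝ) (hab : a < b)
    (p : ℝ) (hp : 0 < p)
    (F : ℂ → ℂ) (hF : ∀ z : ℂ, 0 < z.im → F z = ∫ t : ℝ, ((t : ℂ) - z)⁻¹ ∂μ)
    (hliminf : Filter.liminf
      (fun y : ℝ => ∫⁻ x in Set.Ioo a b,
        ENNReal.ofReal (‖F ((x : ℂ) + (y : ℂ) * Complex.I)‖ ^ (1 + p)))
      (𝓝[>] (0 : ℝ)) < ⊤) :
    μ.restrict (Set.Ioo a b) ≪ MeasureTheory.volume ∧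
    ∃ g : ℝ → ℝ≥0∞,
      μ.restrict (Set.Ioo a b) =
        (MeasureTheory.volume.restrict (Set.Ioo a b)).withDensity g ∧
      ∫⁻ x in Set.Ioo a b, g x ^ (1 + p) < ⊤ := by
  set f : ℝ → ℝ≥0∞ := fun y => ∫⁻ x in Set.Ioo a b,
      ENNReal.ofReal (‖F ((x : ℂ) + (y : ℂ) * Complex.I)‖ ^ (1 + p)) with hfdef
  set C : ℝ≥0∞ := (liminf f (𝓝[>] (0:ℝ))) + 1 with hCdef
  have hCtop : C ≠ ⊤ := ENNReal.add_ne_top.2 ⟨hliminf.ne, ENNReal.one_ne_top⟩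
  have hCgt : liminf f (𝓝[>] (0:ℝ)) < C := ENNReal.lt_add_right hliminf.ne one_ne_zero
  have hfreq : ∃ᶠ y in 𝓝[>] (0:ℝ), f y < C := frequently_lt_of_liminf_lt (by isBoundedDefault) hCgt
  have hex : ∀ n : ℕ, ∃ y : ℝ, f y < C ∧ y ∈ Set.Ioo (0:ℝ) (1/(n+1)) := by
    intro n
    have hmem : Set.Ioo (0:ℝ) (1/(n+1)) ∈ 𝓝[>] (0:ℝ) :=
      Ioo_mem_nhdsGT_of_mem ⟨le_refl 0, by positivity⟩
    exact (hfreq.and_eventually (eventually_of_mem hmem fun y hy => hy)).exists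
  choose yseq hyC hymem using hex
  have hpos : ∀ n, 0 < yseq n := fun n => (hymem n).1
  have hlim : Tendsto yseq atTop (𝓝[>] (0:ℝ)) := by
    refine tendsto_nhdsWithin_of_tendsto_nhds_of_eventually_within _ ?_
      (Eventually.of_forall fun n => hpos n)
    exact squeeze_zero (fun n => (hpos n).le) (fun n => (hymem n).2.le)
      tendsto_one_div_add_atTop_nhds_zero_nat
  -- measurability of lines
  have hlineMeas : ∀ y : ℝ, 0 < y → Measurable (fun x : ℝ =>
      ENNReal.ofReal (‖F ((x:ℂ) + (y:ℂ)*Complex.I)‖ ^ (1+p))) := by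
    intro y hy
    have hc : Continuous fun x : ℝ => ‖F ((x:ℂ) + (y:ℂ)*Complex.I)‖ :=
      continuous_norm.comp (aux_contF μ hF y hy)
    exact (ENNReal.continuous_ofReal.comp
      (hc.rpow_const fun x => Or.inr (by linarith))).measurable
  have hlineMeas' : ∀ y : ℝ, 0 < y → Measurable (fun x : ℝ =>
      ENNReal.ofReal (‖F ((x:ℂ) + (y:ℂ)*Complex.I)‖)) := by
    intro y hy
    exact (ENNReal.continuous_ofReal.comp
      (continuous_norm.comp (aux_contF μ hF y hy))).measurable
  ----------------------------------------------------------------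
  -- Part 1 : absolute continuity
  ----------------------------------------------------------------
  have hπ0 : (ENNReal.ofReal Real.pi) ≠ 0 := by
    simp only [ne_eq, ENNReal.ofReal_eq_zero, not_le]
    exact Real.pi_pos
  set K : ℝ≥0∞ := (ENNReal.ofReal Real.pi)⁻¹ * C ^ (1/(1+p)) with hKdef
  have hKtop : K ≠ ⊤ :=
    ENNReal.mul_ne_top (by simp [hπ0]) (ENNReal.rpow_ne_top_of_nonneg (by positivity) hCtop)
  have hkey : ∀ s : Set ℝ, ∀ ε : ℝ, 0 < ε → volume s = 0 →
      μ (s ∩ Set.Ioo a b) ≤ K * (ENNReal.ofReal ε) ^ (p/(1+p)) := by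
    intro s ε hε hs0
    obtain ⟨U, hsU, hUopen, hUvol⟩ := Set.exists_isOpen_lt_of_lt s (ENNReal.ofReal ε)
      (by rw [hs0]; exact ENNReal.ofReal_pos.2 hε)
    set V := U ∩ Set.Ioo a b with hVdef
    have hVopen : IsOpen V := hUopen.inter isOpen_Ioo
    have hμV : μ (s ∩ Set.Ioo a b) ≤ μ V :=
      measure_mono (Set.inter_subset_inter_left _ hsU)
    -- Hölder bound for each n
    have hhold : ∀ n, (∫⁻ x in V,
        ENNReal.ofReal ((F ((x:ℂ) + (yseq n : ℂ) * Complex.I)).im))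
        ≤ C ^ (1/(1+p)) * (ENNReal.ofReal ε) ^ (p/(1+p)) := by
      intro n
      have hmono1 : (∫⁻ x in V,
          ENNReal.ofReal ((F ((x:ℂ) + (yseq n : ℂ) * Complex.I)).im))
          ≤ ∫⁻ x in V, ENNReal.ofReal (‖F ((x:ℂ) + (yseq n : ℂ) * Complex.I)‖) := by
        refine lintegral_mono fun x => ENNReal.ofReal_le_ofReal ?_
        exact le_trans (le_abs_self _) (Complex.abs_im_le_norm _)
      refine hmono1.trans ?_
      have hH := aux_holder (volume.restrict V)
        ((hlineMeas' (yseq n) (hpos n)).aemeasurable) hp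
      refine hH.trans ?_
      refine mul_le_mul' (ENNReal.rpow_le_rpow ?_ (by positivity))
        (ENNReal.rpow_le_rpow ?_ (by positivity))
      · have heq : ∀ x : ℝ,
            (ENNReal.ofReal (‖F ((x:ℂ) + (yseq n : ℂ) * Complex.I)‖)) ^ (1+p)
            = ENNReal.ofReal (‖F ((x:ℂ) + (yseq n : ℂ) * Complex.I)‖ ^ (1+p)) :=
          fun x => ENNReal.ofReal_rpow_of_nonneg (norm_nonneg _) (by linarith)
        calc (∫⁻ x in V,
            (ENNReal.ofReal (‖F ((x:ℂ) + (yseq n : ℂ) * Complex.I)‖)) ^ (1+p))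
            = ∫⁻ x in V,
              ENNReal.ofReal (‖F ((x:ℂ) + (yseq n : ℂ) * Complex.I)‖ ^ (1+p)) :=
              lintegral_congr fun x => heq x
          _ ≤ f (yseq n) := lintegral_mono_set Set.inter_subset_right
          _ ≤ C := (hyC n).le
      · rw [Measure.restrict_apply_univ]
        exact (measure_mono Set.inter_subset_left).trans hUvol.le
    have h1 := aux_open_bound μ hF V hVopen yseq hpos hlim
    have h2 : liminf (fun n => ∫⁻ x in V,
        ENNReal.ofReal ((F ((x:ℂ) + (yseq n : ℂ) * Complex.I)).im)) atTop
        ≤ C ^ (1/(1+p)) * (ENNReal.ofReal ε) ^ (p/(1+p)) :=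
      liminf_le_of_frequently_le' (Frequently.of_forall hhold)
    have h3 : ENNReal.ofReal Real.pi * μ V ≤ C ^ (1/(1+p)) * (ENNReal.ofReal ε) ^ (p/(1+p)) :=
      h1.trans h2
    calc μ (s ∩ Set.Ioo a b) ≤ μ V := hμV
      _ = (ENNReal.ofReal Real.pi)⁻¹ * (ENNReal.ofReal Real.pi * μ V) := by
          rw [← mul_assoc, ENNReal.inv_mul_cancel hπ0 ENNReal.ofReal_ne_top, one_mul]
      _ ≤ (ENNReal.ofReal Real.pi)⁻¹ * (C ^ (1/(1+p)) * (ENNReal.ofReal ε) ^ (p/(1+p))) :=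
          mul_le_mul_right h3 _
      _ = K * (ENNReal.ofReal ε) ^ (p/(1+p)) := by rw [hKdef, mul_assoc]
  have hAC : μ.restrict (Set.Ioo a b) ≪ (volume : Measure ℝ) := by
    refine Measure.AbsolutelyContinuous.mk fun s hs hs0 => ?_
    rw [Measure.restrict_apply hs]
    have htend0 : Tendsto (fun n : ℕ => K * (ENNReal.ofReal (1/(n+1:ℝ))) ^ (p/(1+p)))
        atTop (𝓝 0) := by
      have h1 : Tendsto (fun n : ℕ => ((1/(n+1:ℝ)) ^ (p/(1+p)))) atTop (𝓝 0) := by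
        have hc : ContinuousAt (fun x : ℝ => x ^ (p/(1+p))) 0 :=
          Real.continuousAt_rpow_const 0 _ (Or.inr (by positivity))
        have h0 := hc.tendsto.comp tendsto_one_div_add_atTop_nhds_zero_nat
        rwa [Real.zero_rpow (by positivity : (0:ℝ) < p/(1+p)).ne'] at h0
      have h2 : Tendsto (fun n : ℕ => ENNReal.ofReal ((1/(n+1:ℝ)) ^ (p/(1+p)))) atTop (𝓝 0) := by
        have h0 := (ENNReal.continuous_ofReal.tendsto 0).comp h1
        simpa [Function.comp_def] using h0
      have h2' : Tendsto (fun n : ℕ => (ENNReal.ofReal (1/(n+1:ℝ))) ^ (p/(1+p))) atTop (𝓝 0) := by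
        refine h2.congr fun n => ?_
        rw [ENNReal.ofReal_rpow_of_nonneg (by positivity) (by positivity)]
      have h3 := ENNReal.Tendsto.const_mul h2' (Or.inr hKtop)
      simpa using h3
    have hb : ∀ n : ℕ, μ (s ∩ Set.Ioo a b) ≤ K * (ENNReal.ofReal (1/(n+1:ℝ))) ^ (p/(1+p)) :=
      fun n => hkey s (1/(n+1:ℝ)) (by positivity) hs0
    have := ge_of_tendsto htend0 (Eventually.of_forall hb)
    exact le_antisymm this zero_le
  ----------------------------------------------------------------
  -- Part 2 : the density and its L^{1+p} bound
  ----------------------------------------------------------------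
  set g : ℝ → ℝ≥0∞ := μ.rnDeriv volume with hgdef
  have hbesi := Besicovitch.ae_tendsto_rnDeriv μ (volume : Measure ℝ)
  have hae : ∀ᵐ x ∂(volume : Measure ℝ), g x ^ (1+p)
      ≤ liminf (fun n =>
          ENNReal.ofReal (‖F ((x:ℂ) + (yseq n : ℂ)*Complex.I)‖ ^ (1+p))) atTop := by
    filter_upwards [hbesi] with x hx
    have h1 : Tendsto (fun n => μ (closedBall x (yseq n)) / volume (closedBall x (yseq n)))
        atTop (𝓝 (g x)) := hx.comp hlim
    have h2 : ∀ n, μ (closedBall x (yseq n)) / volume (closedBall x (yseq n))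
        ≤ ENNReal.ofReal (‖F ((x:ℂ) + (yseq n : ℂ)*Complex.I)‖) := by
      intro n
      rw [Real.volume_closedBall]
      refine ENNReal.div_le_of_le_mul ?_
      rw [mul_comm]
      exact aux_ball_bound μ hF x (yseq n) (hpos n)
    have h3 : g x ≤ liminf (fun n =>
        ENNReal.ofReal (‖F ((x:ℂ) + (yseq n : ℂ)*Complex.I)‖)) atTop := by
      rw [← h1.liminf_eq]
      exact liminf_le_liminf (Eventually.of_forall h2)
    have h4 := ENNReal.rpow_le_rpow h3 (by linarith : (0:ℝ) ≤ 1+p)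
    refine h4.trans ?_
    have hmono : Monotone (fun z : ℝ≥0∞ => z ^ (1+p)) :=
      fun u v huv => ENNReal.rpow_le_rpow huv (by linarith)
    rw [hmono.map_liminf_of_continuousAt
      (fun n => ENNReal.ofReal (‖F ((x:ℂ) + (yseq n : ℂ)*Complex.I)‖))
      (ENNReal.continuous_rpow_const.continuousAt)]
    refine liminf_le_liminf (Eventually.of_forall fun n => ?_)
    simp only [Function.comp_apply]
    rw [ENNReal.ofReal_rpow_of_nonneg (norm_nonneg _) (by linarith)]
  have hIntC : ∫⁻ x in Set.Ioo a b, g x ^ (1+p) ≤ C := by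
    calc ∫⁻ x in Set.Ioo a b, g x ^ (1+p)
        ≤ ∫⁻ x in Set.Ioo a b, liminf (fun n =>
            ENNReal.ofReal (‖F ((x:ℂ) + (yseq n : ℂ)*Complex.I)‖ ^ (1+p))) atTop :=
          lintegral_mono_ae (ae_restrict_of_ae hae)
      _ ≤ liminf (fun n => f (yseq n)) atTop :=
          lintegral_liminf_le fun n => hlineMeas (yseq n) (hpos n)
      _ ≤ C := liminf_le_of_frequently_le' (Frequently.of_forall fun n => (hyC n).le)
  -- withDensity equality
  have hsing0 : (μ.singularPart volume).restrict (Set.Ioo a b) = 0 := by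
    have hle : (μ.singularPart volume).restrict (Set.Ioo a b) ≤ μ.restrict (Set.Ioo a b) :=
      Measure.restrict_mono (le_refl _) (Measure.singularPart_le μ volume)
    exact Measure.eq_zero_of_absolutelyContinuous_of_mutuallySingular
      ((Measure.absolutelyContinuous_of_le hle).trans hAC)
      ((Measure.mutuallySingular_singularPart μ volume).mono
        (Measure.restrict_le_self) le_rfl)
  have hwd : μ.restrict (Set.Ioo a b) = (volume.restrict (Set.Ioo a b)).withDensity g := by
    have hdec := μ.haveLebesgueDecomposition_add volume
    calc μ.restrict (Set.Ioo a b)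
        = ((μ.singularPart volume) + volume.withDensity g).restrict (Set.Ioo a b) := by
          rw [← hdec]
      _ = (μ.singularPart volume).restrict (Set.Ioo a b)
            + (volume.withDensity g).restrict (Set.Ioo a b) := by
          rw [Measure.restrict_add]
      _ = (volume.withDensity g).restrict (Set.Ioo a b) := by rw [hsing0, zero_add]
      _ = (volume.restrict (Set.Ioo a b)).withDensity g :=
          restrict_withDensity measurableSet_Ioo g
  exact ⟨hAC, g, hwd, lt_of_le_of_lt hIntC (lt_top_iff_ne_top.2 hCtop)⟩

end
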